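/- Let Ω ⊂ ℝ² be a bounded open set and Ω¹ = Ω × (−1/2, 1/2), with points x = (x', x₃). Let M, K₁, K₂ > 0, let Ā : Ω → M_{3×3}(ℝ) be measurable with ‖Ā(x')‖_F ≤ M and Ā(x') invertible with ‖Ā(x')⁻¹‖_F ≤ M, and let B ∈ L^∞(Ω¹; M_{3×3}(ℝ)) with ‖B‖_{L^∞} ≤ K₂. For h > 0 set A^h(x) = Ā(x') + h B(x). Then there exist constants h₀ > 0 and C > 0, depending only on M, K₁, K₂, such that for all 0 < h < h₀ and every F ∈ L²(Ω¹; M_{3×3}(ℝ)) with ‖F‖_{L²} ≤ K₁: A^h(x) is invertible for a.e. x, and ∫_{Ω¹} dist²(F(x) Ā(x')⁻¹, SO(3)) dx ≤ C ( h² + ∫_{Ω¹} dist²(F(x) A^h(x)⁻¹, SO(3)) dx ). -/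

import Mathlib

open MeasureTheory Matrix Set

attribute [local instance] Matrix.frobeniusNormedAddCommGroup

/-- The set of special orthogonal `3×3` real matrices. -/
def SO3 : Set (Matrix (Fin 3) (Fin 3) ℝ) := {R | Rᵀ * R = 1 ∧ R.det = 1}

/-- The unit-thickness domain `Ω¹ = Ω × (−1/2, 1/2)`, points written `x = (x', x₃)`. -/
def Omega1 (Ω : Set (Fin 2 → ℝ)) : Set (Fin 3 → ℝ) :=
  {x | ![x 0, x 1] ∈ Ω ∧ x 2 ∈ Ioo (-(1 : ℝ) / 2) (1 / 2)}


instance : MeasurableSpace (Matrix (Fin 3) (Fin 3) ℝ) :=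
  inferInstanceAs (MeasurableSpace (Fin 3 → Fin 3 → ℝ))
instance : BorelSpace (Matrix (Fin 3) (Fin 3) ℝ) :=
  inferInstanceAs (BorelSpace (Fin 3 → Fin 3 → ℝ))
instance : TopologicalSpace.PseudoMetrizableSpace (Matrix (Fin 3) (Fin 3) ℝ) :=
  inferInstanceAs (TopologicalSpace.PseudoMetrizableSpace (Fin 3 → Fin 3 → ℝ))
instance : SecondCountableTopology (Matrix (Fin 3) (Fin 3) ℝ) :=
  inferInstanceAs (SecondCountableTopology (Fin 3 → Fin 3 → ℝ))

section aux
attribute [local instance] Matrix.frobeniusNormedRing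
attribute [local instance] Matrix.frobeniusNormedAlgebra

lemma isUnit_one_add' (c : Matrix (Fin 3) (Fin 3) ℝ) (hc : ‖c‖ < 1) :
    IsUnit (1 + c) := by
  have : ‖-c‖ < 1 := by rwa [norm_neg]
  exact ⟨Units.oneSub (-c) this, by simp [Units.oneSub]⟩

lemma norm_smul_mat (t : ℝ) (A : Matrix (Fin 3) (Fin 3) ℝ) : ‖t • A‖ = |t| * ‖A‖ := by
  rw [norm_smul, Real.norm_eq_abs]

lemma meas_mul3 {α : Type*} [MeasurableSpace α]
    {F G : α → Matrix (Fin 3) (Fin 3) ℝ} (hF : Measurable F) (hG : Measurable G) :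
    Measurable (fun x => F x * G x) := by
  refine measurable_pi_lambda _ fun i => measurable_pi_lambda _ fun j => ?_
  have : (fun x => (F x * G x) i j) = fun x => ∑ k, F x i k * G x k j := by
    funext x; rw [Matrix.mul_apply]
  rw [this]
  refine Finset.measurable_sum _ fun k _ => Measurable.mul ?_ ?_
  · exact (measurable_pi_apply k).comp ((measurable_pi_apply i).comp hF)
  · exact (measurable_pi_apply j).comp ((measurable_pi_apply k).comp hG)

lemma aemeas_mul {α : Type*} [MeasurableSpace α] {μ : Measure α}
    {F G : α → Matrix (Fin 3) (Fin 3) ℝ} (hF : AEMeasurable F μ) (hG : Measurable G) :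
    AEStronglyMeasurable (fun x => F x * G x) μ := by
  obtain ⟨F', hF'm, hFeq⟩ := hF
  exact ⟨fun x => F' x * G x, (meas_mul3 hF'm hG).stronglyMeasurable,
    hFeq.mono fun x hx => by simp only []; rw [hx]⟩

lemma measurable_inv3 {α : Type*} [MeasurableSpace α]
    {f : α → Matrix (Fin 3) (Fin 3) ℝ} (hf : Measurable f) :
    Measurable (fun x => (f x)⁻¹) := by
  refine measurable_pi_lambda _ fun i => measurable_pi_lambda _ fun j => ?_
  have : (fun x => (f x)⁻¹ i j) = fun x => (f x).det⁻¹ * (f x).adjugate i j := by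
    funext x
    rw [Matrix.inv_def, Ring.inverse_eq_inv, Matrix.smul_apply, smul_eq_mul]
  rw [this]
  have hdet : Measurable fun x => (f x).det := by
    simp only [Matrix.det_fin_three]; fun_prop
  refine hdet.inv.mul ?_
  simp only [Matrix.adjugate_fin_three]
  fin_cases i <;> fin_cases j <;> simp <;> fun_prop
end aux


lemma measurable_proj2 : Measurable fun x : Fin 3 → ℝ => ![x 0, x 1] := by
  refine measurable_pi_lambda _ fun j => ?_
  fin_cases j
  · simpa using measurable_pi_apply (0 : Fin 3)
  · simpa using measurable_pi_apply (1 : Fin 3)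

lemma measurableSet_Omega1 {Ω : Set (Fin 2 → ℝ)} (hΩ : MeasurableSet Ω) :
    MeasurableSet (Omega1 Ω) := by
  have : Omega1 Ω = (fun x : Fin 3 → ℝ => ![x 0, x 1]) ⁻¹' Ω ∩
      (fun x : Fin 3 → ℝ => x 2) ⁻¹' (Ioo (-(1 : ℝ) / 2) (1 / 2)) := rfl
  rw [this]
  exact (measurable_proj2 hΩ).inter ((measurable_pi_apply 2) measurableSet_Ioo)

lemma isBounded_Omega1 {Ω : Set (Fin 2 → ℝ)} (hΩ : Bornology.IsBounded Ω) :
    Bornology.IsBounded (Omega1 Ω) := by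
  obtain ⟨r, hr⟩ := isBounded_iff_forall_norm_le.mp hΩ
  refine isBounded_iff_forall_norm_le.mpr ⟨max r 1, fun x hx => ?_⟩
  have h0 : (0:ℝ) ≤ max r 1 := le_trans zero_le_one (le_max_right r 1)
  refine (pi_norm_le_iff_of_nonneg h0).mpr fun i => ?_
  have h1 := hr _ hx.1
  fin_cases i
  · exact le_trans ((norm_le_pi_norm (![x 0, x 1]) 0).trans h1) (le_max_left r 1)
  · exact le_trans ((norm_le_pi_norm (![x 0, x 1]) 1).trans h1) (le_max_left r 1)
  · obtain ⟨ha, hb⟩ := hx.2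
    show ‖x 2‖ ≤ max r 1
    rw [Real.norm_eq_abs]
    have : |x 2| ≤ 1 := by rw [abs_le]; constructor <;> linarith
    exact this.trans (le_max_right r 1)

lemma ae_Omega1_of_ae {Ω : Set (Fin 2 → ℝ)} (hΩ : MeasurableSet Ω)
    {p : (Fin 2 → ℝ) → Prop} (hp : ∀ᵐ x' ∂volume.restrict Ω, p x') :
    ∀ᵐ x ∂volume.restrict (Omega1 Ω), p ![x 0, x 1] := by
  obtain ⟨t, hsub, htm, ht0⟩ := exists_measurable_superset_of_null (ae_iff.mp hp)
  rw [Measure.restrict_apply htm] at ht0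
  have hNm : MeasurableSet (t ∩ Ω) := htm.inter hΩ
  have key : volume {x : Fin 3 → ℝ | ![x 0, x 1] ∈ t ∩ Ω} = 0 := by
    have hmp := volume_preserving_piFinSuccAbove (fun _ : Fin 3 => ℝ) 2
    have hpre : {x : Fin 3 → ℝ | ![x 0, x 1] ∈ t ∩ Ω} =
        (MeasurableEquiv.piFinSuccAbove (fun _ : Fin 3 => ℝ) 2) ⁻¹' (univ ×ˢ (t ∩ Ω)) := by
      ext x
      simp only [mem_setOf_eq, mem_preimage, MeasurableEquiv.piFinSuccAbove_apply, mem_prod,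
        mem_univ, true_and]
      have : ((Fin.insertNthEquiv (fun _ : Fin 3 => ℝ) 2).symm x).2 = ![x 0, x 1] := by
        funext j; fin_cases j <;> rfl
      rw [this]
    rw [hpre, hmp.measure_preimage (MeasurableSet.univ.prod hNm).nullMeasurableSet,
      Measure.volume_eq_prod, Measure.prod_prod, ht0, mul_zero]
  have h1 : ∀ᵐ x ∂volume.restrict (Omega1 Ω), ![x 0, x 1] ∉ t ∩ Ω :=
    ae_restrict_of_ae (by rw [ae_iff]; simpa [not_not] using key)
  have h2 : ∀ᵐ x ∂volume.restrict (Omega1 Ω), x ∈ Omega1 Ω :=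
    ae_restrict_mem (measurableSet_Omega1 hΩ)
  filter_upwards [h1, h2] with x hx1 hx2
  by_contra hpx
  exact hx1 ⟨hsub (by simpa using hpx), hx2.1⟩


lemma sq_ineq (u v w : ℝ) (hu : 0 ≤ u) (hv : 0 ≤ v) (hw : 0 ≤ w) (h : u ≤ v + w) :
    u ^ 2 ≤ 2 * v ^ 2 + 2 * w ^ 2 := by nlinarith [sq_nonneg (v - w)]

open Metric in
set_option maxHeartbeats 2000000 in
/-- **Estimate (16) of Section 3.1 of the paper.** For `A^h = Ā + hB` with `Ā, Ā⁻¹`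
bounded by `M` and `‖B‖_{L^∞} ≤ K₂`, there are `h₀, C > 0` depending only on
`M, K₁, K₂` such that for `0 < h < h₀` and every `F ∈ L²` with `‖F‖_{L²} ≤ K₁`, the
matrix `A^h(x)` is invertible for a.e. `x`, and
`∫ dist²(F·Ā⁻¹, SO(3)) ≤ C (h² + ∫ dist²(F·(A^h)⁻¹, SO(3)))`. -/
theorem stmt12 (M K₁ K₂ : ℝ) (hM : 0 < M) (hK₁ : 0 < K₁) (hK₂ : 0 < K₂) :
    ∃ h₀ > (0 : ℝ), ∃ C > (0 : ℝ),
    ∀ Ω : Set (Fin 2 → ℝ), IsOpen Ω → Bornology.IsBounded Ω →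
    ∀ Abar : (Fin 2 → ℝ) → Matrix (Fin 3) (Fin 3) ℝ,
      (∀ i j, Measurable fun x' => Abar x' i j) →
      (∀ᵐ x' ∂volume.restrict Ω,
        ‖Abar x'‖ ≤ M ∧ IsUnit (Abar x') ∧ ‖(Abar x')⁻¹‖ ≤ M) →
    ∀ B : (Fin 3 → ℝ) → Matrix (Fin 3) (Fin 3) ℝ,
      (∀ i j, Measurable fun x => B x i j) →
      (∀ᵐ x ∂volume.restrict (Omega1 Ω), ‖B x‖ ≤ K₂) →
    ∀ h : ℝ, 0 < h → h < h₀ →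
    ∀ F : (Fin 3 → ℝ) → Matrix (Fin 3) (Fin 3) ℝ,
      MemLp F 2 (volume.restrict (Omega1 Ω)) →
      (∫ x in Omega1 Ω, ‖F x‖ ^ 2) ≤ K₁ ^ 2 →
    (∀ᵐ x ∂volume.restrict (Omega1 Ω), IsUnit (Abar ![x 0, x 1] + h • B x)) ∧
    ∫ x in Omega1 Ω, Metric.infDist (F x * (Abar ![x 0, x 1])⁻¹) SO3 ^ 2 ≤
      C * (h ^ 2 +
        ∫ x in Omega1 Ω,
          Metric.infDist (F x * (Abar ![x 0, x 1] + h • B x)⁻¹) SO3 ^ 2) := by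
  refine ⟨1/(2*M*K₂), by positivity, 2 + 8*M^4*K₂^2*K₁^2, by positivity, ?_⟩
  intro Ω hΩo hΩb Abar hAm hAae B hBm hBae h hh0 hh1 F hF hFK
  have hΩm : MeasurableSet Ω := hΩo.measurableSet
  have hAae1 := ae_Omega1_of_ae hΩm hAae
  have hhMK : h * (K₂ * M) < 1/2 := by
    have h2 : h * (2*M*K₂) < 1 := (lt_div_iff₀ (by positivity)).mp hh1
    nlinarith
  have hone : (1 : Matrix (Fin 3) (Fin 3) ℝ) ∈ SO3 := by
    constructor <;> simp [Matrix.transpose_one]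
  -- the pointwise a.e. facts
  have main_ae : ∀ᵐ x ∂volume.restrict (Omega1 Ω),
      IsUnit (Abar ![x 0, x 1] + h • B x) ∧
      infDist (F x * (Abar ![x 0, x 1])⁻¹) SO3 ^ 2 ≤
        2 * infDist (F x * (Abar ![x 0, x 1] + h • B x)⁻¹) SO3 ^ 2 +
          8*h^2*M^4*K₂^2*‖F x‖^2 ∧
      infDist (F x * (Abar ![x 0, x 1] + h • B x)⁻¹) SO3 ^ 2 ≤
        8*M^2*‖F x‖^2 + 2*‖(1 : Matrix (Fin 3) (Fin 3) ℝ)‖^2 := by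
    filter_upwards [hAae1, hBae] with x hA hB
    obtain ⟨hA1, hA2, hA3⟩ := hA
    set a := Abar ![x 0, x 1] with ha
    set b := B x with hb
    have hdet1 : a * a⁻¹ = 1 := Matrix.mul_nonsing_inv a ((Matrix.isUnit_iff_isUnit_det a).mp hA2)
    have hbn : ‖h • b‖ = h * ‖b‖ := by rw [norm_smul_mat, abs_of_pos hh0]
    have hc : ‖a⁻¹ * (h • b)‖ < 1 := by
      have h5 := (Matrix.frobenius_norm_mul a⁻¹ (h • b))
      rw [hbn] at h5
      have hstep : ‖a⁻¹‖ * (h * ‖b‖) ≤ M * (h * K₂) :=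
        mul_le_mul hA3 (mul_le_mul_of_nonneg_left hB hh0.le) (by positivity) hM.le
      nlinarith [h5, hstep]
    have hu : IsUnit (a + h • b) := by
      have heq : a + h • b = a * (1 + a⁻¹ * (h • b)) := by
        rw [mul_add, mul_one, ← mul_assoc, hdet1, one_mul]
      rw [heq]
      exact hA2.mul (isUnit_one_add' _ hc)
    set s := a + h • b with hs
    have hs1 : s⁻¹ * s = 1 := Matrix.nonsing_inv_mul s ((Matrix.isUnit_iff_isUnit_det s).mp hu)
    have e1 : a⁻¹ = s⁻¹ + h • (s⁻¹ * b * a⁻¹) := by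
      have e0 : s * a⁻¹ = 1 + h • (b * a⁻¹) := by
        rw [hs, add_mul, hdet1, smul_mul_assoc]
      calc a⁻¹ = 1 * a⁻¹ := (one_mul _).symm
        _ = (s⁻¹ * s) * a⁻¹ := by rw [hs1]
        _ = s⁻¹ * (s * a⁻¹) := by rw [mul_assoc]
        _ = s⁻¹ * (1 + h • (b * a⁻¹)) := by rw [e0]
        _ = s⁻¹ + h • (s⁻¹ * b * a⁻¹) := by
            rw [mul_add, mul_one, mul_smul_comm, mul_assoc]
    have e2 : s⁻¹ = a⁻¹ - h • (s⁻¹ * b * a⁻¹) := eq_sub_of_add_eq e1.symm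
    have hn3 : ‖s⁻¹ * b * a⁻¹‖ ≤ ‖s⁻¹‖ * ‖b‖ * ‖a⁻¹‖ := by
      calc ‖s⁻¹ * b * a⁻¹‖ ≤ ‖s⁻¹ * b‖ * ‖a⁻¹‖ := Matrix.frobenius_norm_mul _ _
        _ ≤ ‖s⁻¹‖ * ‖b‖ * ‖a⁻¹‖ := by
            have := Matrix.frobenius_norm_mul s⁻¹ b
            exact mul_le_mul_of_nonneg_right this (norm_nonneg _)
    have hsn : ‖s⁻¹‖ ≤ 2*M := by
      have h1 : ‖s⁻¹‖ ≤ ‖a⁻¹‖ + ‖h • (s⁻¹ * b * a⁻¹)‖ := by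
        conv_lhs => rw [e2]
        exact norm_sub_le _ _
      rw [norm_smul_mat, abs_of_pos hh0] at h1
      have t1 : h * ‖s⁻¹ * b * a⁻¹‖ ≤ h * (‖s⁻¹‖ * ‖b‖ * ‖a⁻¹‖) :=
        mul_le_mul_of_nonneg_left hn3 hh0.le
      have t2 : ‖s⁻¹‖ * ‖b‖ * ‖a⁻¹‖ ≤ ‖s⁻¹‖ * K₂ * M :=
        mul_le_mul (mul_le_mul_of_nonneg_left hB (norm_nonneg _)) hA3 (norm_nonneg _)
          (by positivity)
      have t3 : h * (‖s⁻¹‖ * K₂ * M) = (h * (K₂ * M)) * ‖s⁻¹‖ := by ring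
      have t4 : (h * (K₂ * M)) * ‖s⁻¹‖ ≤ (1/2) * ‖s⁻¹‖ :=
        mul_le_mul_of_nonneg_right hhMK.le (norm_nonneg _)
      have t5 : h * (‖s⁻¹‖ * ‖b‖ * ‖a⁻¹‖) ≤ (1/2) * ‖s⁻¹‖ := by
        refine le_trans (mul_le_mul_of_nonneg_left t2 hh0.le) ?_
        rw [t3]; exact t4
      linarith
    have hdiff : ‖F x * a⁻¹ - F x * s⁻¹‖ ≤ h * (2*M^2*K₂) * ‖F x‖ := by
      have h6 : a⁻¹ - s⁻¹ = h • (s⁻¹ * b * a⁻¹) := sub_eq_of_eq_add' e1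
      have heq : F x * a⁻¹ - F x * s⁻¹ = h • (F x * (s⁻¹ * b * a⁻¹)) := by
        rw [← mul_sub, h6, mul_smul_comm]
      rw [heq, norm_smul_mat, abs_of_pos hh0]
      have h4 : ‖F x * (s⁻¹ * b * a⁻¹)‖ ≤ ‖F x‖ * (‖s⁻¹‖ * ‖b‖ * ‖a⁻¹‖) := by
        calc ‖F x * (s⁻¹ * b * a⁻¹)‖ ≤ ‖F x‖ * ‖s⁻¹ * b * a⁻¹‖ := Matrix.frobenius_norm_mul _ _
          _ ≤ ‖F x‖ * (‖s⁻¹‖ * ‖b‖ * ‖a⁻¹‖) :=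
              mul_le_mul_of_nonneg_left hn3 (norm_nonneg _)
      have h5 : ‖s⁻¹‖ * ‖b‖ * ‖a⁻¹‖ ≤ (2*M) * K₂ * M :=
        mul_le_mul (mul_le_mul hsn hB (norm_nonneg _) (by positivity)) hA3 (norm_nonneg _)
          (by positivity)
      calc h * ‖F x * (s⁻¹ * b * a⁻¹)‖ ≤ h * (‖F x‖ * ((2*M) * K₂ * M)) := by
            refine mul_le_mul_of_nonneg_left ?_ hh0.le
            exact h4.trans (mul_le_mul_of_nonneg_left h5 (norm_nonneg _))
        _ = h * (2*M^2*K₂) * ‖F x‖ := by ring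
    refine ⟨hu, ?_, ?_⟩
    · have hR : infDist (F x * a⁻¹) SO3 ≤ infDist (F x * s⁻¹) SO3 + ‖F x * a⁻¹ - F x * s⁻¹‖ := by
        have := infDist_le_infDist_add_dist (x := F x * a⁻¹) (y := F x * s⁻¹) (s := SO3)
        rwa [dist_eq_norm] at this
      have hR2 : infDist (F x * a⁻¹) SO3 ≤ infDist (F x * s⁻¹) SO3 + h * (2*M^2*K₂) * ‖F x‖ :=
        hR.trans (by linarith)
      have hsq := sq_ineq _ _ _ (infDist_nonneg (x := F x * a⁻¹) (s := SO3))
        (infDist_nonneg (x := F x * s⁻¹) (s := SO3))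
        (by positivity : (0:ℝ) ≤ h * (2*M^2*K₂) * ‖F x‖) hR2
      have hring : 2*(h * (2*M^2*K₂) * ‖F x‖)^2 = 8*h^2*M^4*K₂^2*‖F x‖^2 := by ring
      linarith
    · have hd1 : infDist (F x * s⁻¹) SO3 ≤ ‖F x * s⁻¹ - 1‖ := by
        have := infDist_le_dist_of_mem (x := F x * s⁻¹) hone
        rwa [dist_eq_norm] at this
      have hd2 : ‖F x * s⁻¹‖ ≤ ‖F x‖ * (2*M) := by
        calc ‖F x * s⁻¹‖ ≤ ‖F x‖ * ‖s⁻¹‖ := Matrix.frobenius_norm_mul _ _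
          _ ≤ ‖F x‖ * (2*M) := mul_le_mul_of_nonneg_left hsn (norm_nonneg _)
      have hd3 : infDist (F x * s⁻¹) SO3 ≤ ‖F x‖ * (2*M) + ‖(1 : Matrix (Fin 3) (Fin 3) ℝ)‖ := by
        refine hd1.trans ((norm_sub_le _ _).trans ?_)
        linarith
      have hsq := sq_ineq _ _ _ (infDist_nonneg (x := F x * s⁻¹) (s := SO3))
        (by positivity : (0:ℝ) ≤ ‖F x‖ * (2*M)) (norm_nonneg _) hd3
      have hring : 2*(‖F x‖ * (2*M))^2 = 8*M^2*‖F x‖^2 := by ring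
      linarith
  refine ⟨main_ae.mono fun x hx => hx.1, ?_⟩
  -- measurability
  have hAmeas : Measurable fun x : Fin 3 → ℝ => Abar ![x 0, x 1] :=
    measurable_pi_lambda _ fun i => measurable_pi_lambda _ fun j =>
      (hAm i j).comp measurable_proj2
  have hSmeas : Measurable fun x : Fin 3 → ℝ => Abar ![x 0, x 1] + h • B x := by
    refine measurable_pi_lambda _ fun i => measurable_pi_lambda _ fun j => ?_
    have : (fun x : Fin 3 → ℝ => (Abar ![x 0, x 1] + h • B x) i j) =
        fun x => Abar ![x 0, x 1] i j + h * B x i j := by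
      funext x; simp [Matrix.add_apply, Matrix.smul_apply, smul_eq_mul]
    rw [this]
    exact (((measurable_pi_apply j).comp ((measurable_pi_apply i).comp hAmeas))).add
      ((hBm i j).const_mul h)
  have hSinv : Measurable fun x : Fin 3 → ℝ => (Abar ![x 0, x 1] + h • B x)⁻¹ :=
    measurable_inv3 hSmeas
  have hGsm : AEStronglyMeasurable
      (fun x => F x * (Abar ![x 0, x 1] + h • B x)⁻¹) (volume.restrict (Omega1 Ω)) :=
    aemeas_mul hF.1.aemeasurable hSinv
  have hdsm : AEStronglyMeasurable
      (fun x => infDist (F x * (Abar ![x 0, x 1] + h • B x)⁻¹) SO3 ^ 2)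
      (volume.restrict (Omega1 Ω)) :=
    ((continuous_pow 2).comp (continuous_infDist_pt SO3)).comp_aestronglyMeasurable hGsm
  -- integrability
  have hF2 : Integrable (fun x => ‖F x‖ ^ 2) (volume.restrict (Omega1 Ω)) := by
    have := hF.integrable_norm_rpow (by norm_num) (by norm_num)
    simpa [ENNReal.toReal_ofNat, Real.rpow_natCast] using this
  haveI : IsFiniteMeasure (volume.restrict (Omega1 Ω)) := by
    constructor
    rw [Measure.restrict_apply_univ]
    exact (isBounded_Omega1 hΩb).measure_lt_top
  have hint_d : Integrable
      (fun x => infDist (F x * (Abar ![x 0, x 1] + h • B x)⁻¹) SO3 ^ 2)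
      (volume.restrict (Omega1 Ω)) := by
    refine Integrable.mono' ((hF2.const_mul (8*M^2)).add
      (integrable_const (2*‖(1 : Matrix (Fin 3) (Fin 3) ℝ)‖^2))) hdsm ?_
    refine main_ae.mono fun x hx => ?_
    rw [Real.norm_eq_abs, abs_of_nonneg (sq_nonneg _)]
    exact hx.2.2
  have key := integral_mono_of_nonneg
    (ae_of_all _ fun x => sq_nonneg (infDist (F x * (Abar ![x 0, x 1])⁻¹) SO3))
    ((hint_d.const_mul 2).add (hF2.const_mul (8*h^2*M^4*K₂^2)))
    (main_ae.mono fun x hx => hx.2.1)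
  simp only [Pi.add_apply] at key
  rw [integral_add (hint_d.const_mul 2) (hF2.const_mul (8*h^2*M^4*K₂^2)),
    integral_const_mul, integral_const_mul] at key
  have hDnn : 0 ≤ ∫ x in Omega1 Ω,
      infDist (F x * (Abar ![x 0, x 1] + h • B x)⁻¹) SO3 ^ 2 :=
    integral_nonneg fun x => sq_nonneg _
  have hInn : 0 ≤ ∫ x in Omega1 Ω, ‖F x‖ ^ 2 :=
    integral_nonneg fun x => sq_nonneg _
  refine key.trans ?_
  nlinarith [mul_nonneg (by positivity : (0:ℝ) ≤ 8*M^4*K₂^2*h^2)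
      (sub_nonneg.mpr hFK), sq_nonneg h, hDnn,
    mul_nonneg (by positivity : (0:ℝ) ≤ 8*M^4*K₂^2*K₁^2) hDnn]
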